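/- Every minimal sequent is derivable in the system Mp, whose rules are: axiom P, ¬P for any propositional variable P; blended conjunction: from Γ,Δ,A and Γ,Σ,B derive Γ,Δ,Σ,A∧B; par: from Γ,A,B derive Γ,A∨B; and plus: from Γ,Aᵢ derive Γ,A₁∨A₂ (i = 1,2). -/

import Mathlib

/-- Propositional formulas in negation normal form. -/
inductive Fm : Type
  | pos : ℕ → Fm
  | neg : ℕ → Fm
  | conj : Fm → Fm → Fm
  | disj : Fm → Fm → Fm
  deriving DecidableEq

/-- Boolean evaluation of a formula under a valuation. -/
def Fm.eval (v : ℕ → Bool) : Fm → Bool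
  | .pos p => v p
  | .neg p => !(v p)
  | .conj a b => a.eval v && b.eval v
  | .disj a b => a.eval v || b.eval v

/-- A sequent (nonempty multiset of formulas) is valid if under every
valuation some member is true (i.e. the disjunction is a tautology). -/
def Valid (Γ : Multiset Fm) : Prop :=
  Γ ≠ 0 ∧ ∀ v : ℕ → Bool, ∃ A ∈ Γ, Fm.eval v A = true

/-- A sequent is minimal if it is valid and no proper sub-multiset is valid. -/
def MinimalSeq (Γ : Multiset Fm) : Prop :=
  Valid Γ ∧ ∀ Δ : Multiset Fm, Δ < Γ → ¬ Valid Δ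

/-- Derivability in minimal sequent calculus Mp. -/
inductive Mp : Multiset Fm → Prop
  | ax (P : ℕ) : Mp {Fm.pos P, Fm.neg P}
  | blend {Γ Δ S : Multiset Fm} {A B : Fm} :
      Mp (Γ + Δ + {A}) → Mp (Γ + S + {B}) → Mp (Γ + Δ + S + {Fm.conj A B})
  | par {Γ : Multiset Fm} {A B : Fm} :
      Mp (Γ + {A, B}) → Mp (Γ + {Fm.disj A B})
  | plus1 {Γ : Multiset Fm} {A B : Fm} :
      Mp (Γ + {A}) → Mp (Γ + {Fm.disj A B})
  | plus2 {Γ : Multiset Fm} {A B : Fm} :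
      Mp (Γ + {B}) → Mp (Γ + {Fm.disj A B})

namespace StmtAux

def fsize : Fm → ℕ
  | .pos _ => 1
  | .neg _ => 1
  | .conj a b => fsize a + fsize b + 1
  | .disj a b => fsize a + fsize b + 1

def msize (Γ : Multiset Fm) : ℕ := (Γ.map fsize).sum

lemma msize_add (a b : Multiset Fm) : msize (a + b) = msize a + msize b := by
  simp [msize]

lemma msize_singleton (A : Fm) : msize {A} = fsize A := by simp [msize]

lemma msize_mono {a b : Multiset Fm} (h : a ≤ b) : msize a ≤ msize b := by
  obtain ⟨c, rfl⟩ := Multiset.le_iff_exists_add.mp h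
  simp [msize_add]

/-- Decompose a sub-multiset of a sum. -/
lemma decompose {a b c : Multiset Fm} (h : c ≤ a + b) :
    ∃ a' b', a' ≤ a ∧ b' ≤ b ∧ c = a' + b' := by
  refine ⟨c ∩ a, c - a, Multiset.inter_le_right, ?_, ?_⟩
  · rw [Multiset.sub_le_iff_le_add]; exact h.trans (by rw [add_comm])
  · ext x; simp [Multiset.count_sub, Multiset.count_inter]; omega

lemma sup_decomp (a b : Multiset Fm) :
    (a ∩ b) + (a - b) + (b - a) = a ∪ b := by
  ext x; simp [Multiset.count_sub, Multiset.count_inter, Multiset.count_union]; omega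

lemma inf_add_sub (a b : Multiset Fm) : (a ∩ b) + (a - b) = a := by
  ext x; simp [Multiset.count_sub, Multiset.count_inter]; omega

lemma lt_add_single (a : Multiset Fm) (X : Fm) : a < a + {X} := by
  rw [Multiset.lt_iff_cons_le]
  exact ⟨X, le_of_eq (by rw [add_comm, Multiset.singleton_add])⟩

lemma valid_of_le {a b : Multiset Fm} (h : a ≤ b) (hv : Valid a) : Valid b :=
  ⟨fun h0 => hv.1 (le_antisymm (h0 ▸ h) (Multiset.zero_le _)),
   fun v => by obtain ⟨A, hA, hAe⟩ := hv.2 v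
               exact ⟨A, Multiset.mem_of_le h hA, hAe⟩⟩

/-- Every valid multiset contains a minimal valid sub-multiset. -/
lemma exists_minimal {Γ : Multiset Fm} (hv : Valid Γ) :
    ∃ Δ ≤ Γ, MinimalSeq Δ := by
  induction Γ using WellFoundedLT.induction with
  | _ Γ ih =>
    by_cases hm : ∀ Δ : Multiset Fm, Δ < Γ → ¬ Valid Δ
    · exact ⟨Γ, le_refl _, hv, hm⟩
    · push_neg at hm
      obtain ⟨Δ, hlt, hΔ⟩ := hm
      obtain ⟨S0, hle, hmin⟩ := ih Δ hlt hΔ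
      exact ⟨S0, hle.trans hlt.le, hmin⟩

/-- If Δ ≤ Γ, Δ valid, Γ minimal, then Δ = Γ. -/
lemma eq_of_min {Γ Δ : Multiset Fm} (h : MinimalSeq Γ) (hle : Δ ≤ Γ)
    (hv : Valid Δ) : Δ = Γ := by
  rcases lt_or_eq_of_le hle with hlt | heq
  · exact absurd hv (h.2 Δ hlt)
  · exact heq

lemma sub_pair {A B : Fm} {m : Multiset Fm} (h : m ≤ {A, B}) :
    m = 0 ∨ m = {A} ∨ m = {B} ∨ m = {A, B} := by
  have h2 : m ≤ A ::ₘ {B} := h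
  rcases Multiset.le_iff_exists_add.mp h2 with ⟨r, hr⟩
  have hc : Multiset.card m + Multiset.card r = 2 := by
    have := congrArg Multiset.card hr
    simpa using this.symm
  have h012 : Multiset.card m = 0 ∨ Multiset.card m = 1 ∨ Multiset.card m = 2 := by omega
  rcases h012 with hcm | hcm | hcm
  · left; exact Multiset.card_eq_zero.mp hcm
  · obtain ⟨x, rfl⟩ := Multiset.card_eq_one.mp hcm
    have hx : x ∈ ({A, B} : Multiset Fm) := Multiset.mem_of_le h (by simp)
    rcases (by simpa using hx) with rfl | rfl
    · right; left; rfl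
    · right; right; left; rfl
  · right; right; right
    have hr0 : r = 0 := Multiset.card_eq_zero.mp (by omega)
    rw [hr0, add_zero] at hr; exact hr.symm

lemma eval_mem_or {v : ℕ → Bool} {Γ : Multiset Fm} {A : Fm}
    (h : ∃ X ∈ Γ + {A}, Fm.eval v X = true) :
    (∃ X ∈ Γ, Fm.eval v X = true) ∨ Fm.eval v A = true := by
  obtain ⟨X, hX, hXe⟩ := h
  rcases Multiset.mem_add.mp hX with hX | hX
  · exact Or.inl ⟨X, hX, hXe⟩
  · rcases Multiset.mem_singleton.mp hX with rfl
    exact Or.inr hXe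

lemma valid_add {Γ : Multiset Fm} {A : Fm}
    (h : ∀ v, (∃ X ∈ Γ, Fm.eval v X = true) ∨ Fm.eval v A = true) :
    Valid (Γ + {A}) := by
  refine ⟨by simp, fun v => ?_⟩
  rcases h v with ⟨X, hX, hXe⟩ | hA
  · exact ⟨X, by simp [hX], hXe⟩
  · exact ⟨A, by simp, hA⟩

end StmtAux

open StmtAux

theorem stmt_6 (Γ : Multiset Fm) (h : MinimalSeq Γ) : Mp Γ := by
  generalize hn : msize Γ = n
  induction n using Nat.strong_induction_on generalizing Γ with
  | _ n ih =>
  subst hn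
  by_cases hcomp : ∃ X ∈ Γ, ∃ A B, X = Fm.conj A B ∨ X = Fm.disj A B
  · obtain ⟨X, hX, A, B, hc⟩ := hcomp
    have hΓ : Γ = Γ.erase X + {X} := by
      rw [add_comm, Multiset.singleton_add, Multiset.cons_erase hX]
    set Γ' := Γ.erase X with hΓ'
    rcases hc with rfl | rfl
    · -- conjunction case
      -- Γ' + {A} is valid
      have hvA : Valid (Γ' + {A}) := by
        apply valid_add; intro v
        have := (h.1).2 v
        rw [hΓ] at this
        rcases eval_mem_or this with h1 | h1
        · exact Or.inl h1
        · simp [Fm.eval] at h1; exact Or.inr h1.1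
      have hvB : Valid (Γ' + {B}) := by
        apply valid_add; intro v
        have := (h.1).2 v
        rw [hΓ] at this
        rcases eval_mem_or this with h1 | h1
        · exact Or.inl h1
        · simp [Fm.eval] at h1; exact Or.inr h1.2
      obtain ⟨ΘA, hΘAle, hΘAmin⟩ := exists_minimal hvA
      obtain ⟨ΘB, hΘBle, hΘBmin⟩ := exists_minimal hvB
      obtain ⟨ΓA, mA, hΓAle, hmA, rfl⟩ := decompose hΘAle
      obtain ⟨ΓB, mB, hΓBle, hmB, rfl⟩ := decompose hΘBle
      -- mA must be {A}: otherwise ΘA ≤ Γ' < Γ valid, contradicting minimality of Γ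
      have hmA' : mA = {A} := by
        rcases Multiset.le_singleton.mp hmA with h0 | h1
        · exfalso
          rw [h0, add_zero] at hΘAmin
          have hlt : ΓA < Γ := lt_of_le_of_lt hΓAle (hΓ ▸ lt_add_single Γ' (Fm.conj A B))
          exact h.2 ΓA hlt hΘAmin.1
        · exact h1
      have hmB' : mB = {B} := by
        rcases Multiset.le_singleton.mp hmB with h0 | h1
        · exfalso
          rw [h0, add_zero] at hΘBmin
          have hlt : ΓB < Γ := lt_of_le_of_lt hΓBle (hΓ ▸ lt_add_single Γ' (Fm.conj A B))
          exact h.2 ΓB hlt hΘBmin.1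
        · exact h1
      subst hmA' hmB'
      -- (ΓA ∪ ΓB) + {A ∧ B} is valid
      have hvu : Valid ((ΓA ∪ ΓB) + {Fm.conj A B}) := by
        apply valid_add; intro v
        by_cases hA : Fm.eval v A = true
        · by_cases hB : Fm.eval v B = true
          · right; simp [Fm.eval, hA, hB]
          · -- B false: use ΘB
            rcases eval_mem_or (hΘBmin.1.2 v) with h1 | h1
            · left; obtain ⟨X, hX, hXe⟩ := h1
              exact ⟨X, Multiset.mem_of_le (Multiset.le_union_right) hX, hXe⟩
            · exact absurd h1 hB
        · rcases eval_mem_or (hΘAmin.1.2 v) with h1 | h1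
          · left; obtain ⟨X, hX, hXe⟩ := h1
            exact ⟨X, Multiset.mem_of_le (Multiset.le_union_left) hX, hXe⟩
          · exact absurd h1 hA
      have hule : (ΓA ∪ ΓB) + {Fm.conj A B} ≤ Γ := by
        rw [hΓ]
        exact add_le_add (Multiset.union_le hΓAle hΓBle) (le_refl _)
      have hueq := eq_of_min h hule hvu
      -- decompose union
      have hkey : (ΓA ∩ ΓB) + (ΓA - ΓB) + (ΓB - ΓA) + {Fm.conj A B} = Γ := by
        rw [sup_decomp]; exact hueq
      rw [← hkey]
      apply Mp.blend
      · rw [inf_add_sub]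
        exact ih (msize (ΓA + {A})) (by
          calc msize (ΓA + {A}) ≤ msize (Γ' + {A}) := msize_mono (add_le_add hΓAle (le_refl _))
          _ < msize Γ := by
              rw [hΓ, msize_add, msize_add, msize_singleton, msize_singleton]
              have : fsize A < fsize (Fm.conj A B) := by
                simp only [fsize]; omega
              omega) _ hΘAmin rfl
      · have : ΓA ∩ ΓB + (ΓB - ΓA) = ΓB := by
          rw [Multiset.inter_comm]; exact inf_add_sub ΓB ΓA
        rw [this]
        exact ih (msize (ΓB + {B})) (by
          calc msize (ΓB + {B}) ≤ msize (Γ' + {B}) := msize_mono (add_le_add hΓBle (le_refl _))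
          _ < msize Γ := by
              rw [hΓ, msize_add, msize_add, msize_singleton, msize_singleton]
              have : fsize B < fsize (Fm.conj A B) := by
                simp only [fsize]; omega
              omega) _ hΘBmin rfl
    · -- disjunction case
      have hv2 : Valid (Γ' + {A, B}) := by
        refine ⟨by simp, fun v => ?_⟩
        have := (h.1).2 v
        rw [hΓ] at this
        rcases eval_mem_or this with h1 | h1
        · obtain ⟨X, hX, hXe⟩ := h1; exact ⟨X, by simp [hX], hXe⟩
        · simp [Fm.eval] at h1
          rcases h1 with h1 | h1
          · exact ⟨A, by simp, h1⟩
          · exact ⟨B, by simp, h1⟩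
      obtain ⟨Θ, hΘle, hΘmin⟩ := exists_minimal hv2
      obtain ⟨Δ₀, m, hΔ₀le, hm, rfl⟩ := decompose hΘle
      have hsz : ∀ C : Fm, fsize C ≤ fsize A + fsize B →
          msize (Δ₀ + {C}) < msize Γ := by
        intro C hC
        calc msize (Δ₀ + {C}) ≤ msize (Γ' + {C}) := msize_mono (add_le_add hΔ₀le (le_refl _))
        _ < msize Γ := by
            rw [hΓ, msize_add, msize_add, msize_singleton, msize_singleton]
            have : fsize C < fsize (Fm.disj A B) := by simp only [fsize]; omega
            omega
      have hΔ₀Γ : ∀ D : Multiset Fm, Valid (Δ₀ + D) → Δ₀ + D ≤ Γ → Δ₀ + D = Γ :=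
        fun D hv hle => eq_of_min h hle hv
      rcases sub_pair hm with rfl | rfl | rfl | rfl
      · -- m = 0: Δ₀ valid and Δ₀ < Γ, contradiction
        exfalso
        rw [add_zero] at hΘmin
        have hlt : Δ₀ < Γ := lt_of_le_of_lt hΔ₀le (hΓ ▸ lt_add_single Γ' (Fm.disj A B))
        exact h.2 Δ₀ hlt hΘmin.1
      · -- m = {A}: plus1
        have hvd : Valid (Δ₀ + {Fm.disj A B}) := by
          apply valid_add; intro v
          rcases eval_mem_or (hΘmin.1.2 v) with h1 | h1
          · exact Or.inl h1
          · right; simp [Fm.eval, h1]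
        have heq := hΔ₀Γ {Fm.disj A B} hvd (by
          rw [hΓ]; exact add_le_add hΔ₀le (le_refl _))
        rw [← heq]
        exact Mp.plus1 (ih _ (hsz A (by omega)) _ hΘmin rfl)
      · have hvd : Valid (Δ₀ + {Fm.disj A B}) := by
          apply valid_add; intro v
          rcases eval_mem_or (hΘmin.1.2 v) with h1 | h1
          · exact Or.inl h1
          · right; simp [Fm.eval, h1]
        have heq := hΔ₀Γ {Fm.disj A B} hvd (by
          rw [hΓ]; exact add_le_add hΔ₀le (le_refl _))
        rw [← heq]
        exact Mp.plus2 (ih _ (hsz B (by omega)) _ hΘmin rfl)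
      · -- m = {A, B}: par
        have hvd : Valid (Δ₀ + {Fm.disj A B}) := by
          apply valid_add; intro v
          have := hΘmin.1.2 v
          obtain ⟨X, hX, hXe⟩ := this
          rcases Multiset.mem_add.mp hX with hX | hX
          · exact Or.inl ⟨X, hX, hXe⟩
          · right
            rcases (by simpa using hX : X = A ∨ X = B) with rfl | rfl <;>
              simp [Fm.eval, hXe]
        have heq := hΔ₀Γ {Fm.disj A B} hvd (by
          rw [hΓ]; exact add_le_add hΔ₀le (le_refl _))
        rw [← heq]
        apply Mp.par
        refine ih (msize (Δ₀ + {A, B})) ?_ _ hΘmin rfl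
        have : ({A, B} : Multiset Fm) = {A} + {B} := by rfl
        calc msize (Δ₀ + {A, B}) ≤ msize (Γ' + {A, B}) := msize_mono (add_le_add hΔ₀le (le_refl _))
        _ < msize Γ := by
            rw [hΓ, this, msize_add, msize_add, msize_add, msize_singleton,
              msize_singleton, msize_singleton]
            have : fsize A + fsize B < fsize (Fm.disj A B) := by
              simp only [fsize]; omega
            omega
  · -- all literals case
    push_neg at hcomp
    have hlit : ∀ X ∈ Γ, (∃ p, X = Fm.pos p) ∨ (∃ p, X = Fm.neg p) := by
      intro X hX
      cases X with
      | pos p => exact Or.inl ⟨p, rfl⟩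
      | neg p => exact Or.inr ⟨p, rfl⟩
      | conj a b => exact absurd rfl (hcomp _ hX a b).1
      | disj a b => exact absurd rfl (hcomp _ hX a b).2
    -- ∃ p, pos p ∈ Γ ∧ neg p ∈ Γ
    have hpair : ∃ p, Fm.pos p ∈ Γ ∧ Fm.neg p ∈ Γ := by
      by_contra hno
      push_neg at hno
      set v : ℕ → Bool := fun p => !(decide (Fm.pos p ∈ Γ)) with hv
      obtain ⟨X, hX, hXe⟩ := h.1.2 v
      rcases hlit X hX with ⟨p, rfl⟩ | ⟨p, rfl⟩
      · simp [Fm.eval, hv] at hXe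
        exact hXe hX
      · simp [Fm.eval, hv] at hXe
        exact hno p hXe (hX)
    obtain ⟨p, hp, hn⟩ := hpair
    have hle : ({Fm.pos p, Fm.neg p} : Multiset Fm) ≤ Γ := by
      have hmem : Fm.neg p ∈ Γ.erase (Fm.pos p) :=
        (Multiset.mem_erase_of_ne (by simp)).mpr hn
      calc ({Fm.pos p, Fm.neg p} : Multiset Fm) = Fm.pos p ::ₘ {Fm.neg p} := rfl
      _ ≤ Fm.pos p ::ₘ Γ.erase (Fm.pos p) :=
          Multiset.cons_le_cons _ (Multiset.singleton_le.mpr hmem)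
      _ = Γ := Multiset.cons_erase hp
    have hvp : Valid ({Fm.pos p, Fm.neg p} : Multiset Fm) := by
      refine ⟨by simp, fun v => ?_⟩
      by_cases hvp : v p = true
      · exact ⟨Fm.pos p, by simp, by simp [Fm.eval, hvp]⟩
      · exact ⟨Fm.neg p, by simp, by simp [Fm.eval, hvp]⟩
    rw [← eq_of_min h hle hvp]
    exact Mp.ax p
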